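/- Let N > 1, K > 0. Suppose Φ':(0,∞)→(-∞,0] is locally Lipschitz satisfying the Riccati-type differential inequality (Φ')'(t) ≥ -2K·Φ'(t) + (2/N)·Φ'(t)² for a.e. t>0. Then the function t ↦ e^{-2Kt}·(1/N - K/Φ'(t)) is nondecreasing on any interval where Φ' < 0, and consequently -Φ'(t) ≤ KN·(e^{2Kt}(1 - KN/Φ'(0⁺)) - 1)^{-1} for all t > 0 (with Φ'(0⁺) < 0). -/

import Mathlib

open Set Filter MeasureTheory Topology NNReal


lemma slope_seq {f : ℝ → ℝ} {x d : ℝ} (hf : HasDerivAt f d x) :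
    Tendsto (fun n : ℕ => (f (x + ((n : ℝ) + 1)⁻¹) - f x) / ((n : ℝ) + 1)⁻¹) atTop (𝓝 d) := by
  have hslope := hasDerivAt_iff_tendsto_slope.mp hf
  have hu : Tendsto (fun n : ℕ => x + ((n : ℝ) + 1)⁻¹) atTop (𝓝[≠] x) := by
    apply tendsto_nhdsWithin_of_tendsto_nhds_of_eventually_within
    · have : Tendsto (fun n : ℕ => ((n : ℝ) + 1)⁻¹) atTop (𝓝 0) := by
        simpa using (tendsto_one_div_add_atTop_nhds_zero_nat : Tendsto (fun n : ℕ => 1 / ((n : ℝ) + 1)) atTop (𝓝 0))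
      simpa using tendsto_const_nhds.add this
    · filter_upwards with n
      have : (0 : ℝ) < ((n : ℝ) + 1)⁻¹ := by positivity
      simp only [mem_compl_iff, mem_singleton_iff]
      intro h
      nlinarith [h]
  have := hslope.comp hu
  convert this using 2 with n
  simp [slope_def_field, Function.comp, div_eq_iff]

lemma key_lip_mono {H : ℝ → ℝ} {C : ℝ≥0} (hH : LipschitzWith C H) {a b : ℝ} (hab : a ≤ b)
    (hd : ∀ᵐ x, x ∈ Set.Ioo a b → 0 ≤ deriv H x) : H a ≤ H b := by
  rcases eq_or_lt_of_le hab with rfl | hab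
  · exact le_refl _
  set u : ℕ → ℝ := fun n => ((n : ℝ) + 1)⁻¹ with hu_def
  have hu : ∀ n, 0 < u n := fun n => by positivity
  have hcont : Continuous H := hH.continuous
  set F : ℕ → ℝ → ℝ := fun n x => (H (x + u n) - H x) / u n with hF_def
  -- DCT
  have hDCT : Tendsto (fun n => ∫ x in Ioo a b, F n x) atTop
      (𝓝 (∫ x in Ioo a b, deriv H x)) := by
    apply tendsto_integral_of_dominated_convergence (fun _ => (C : ℝ))
    · intro n
      exact ((hcont.comp (continuous_id.add continuous_const)).sub hcont).div_const
        (u n) |>.aestronglyMeasurable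
    · rw [integrable_const_iff]
      right
      rw [isFiniteMeasure_restrict, ← lt_top_iff_ne_top]
      exact measure_Ioo_lt_top
    · intro n
      filter_upwards with x
      rw [Real.norm_eq_abs, abs_div, abs_of_pos (hu n)]
      rw [div_le_iff₀ (hu n)]
      have := hH.dist_le_mul (x + u n) x
      rw [Real.dist_eq, Real.dist_eq] at this
      simpa [abs_of_pos (hu n)] using this
    · have := hH.ae_differentiableAt_real
      filter_upwards [ae_restrict_of_ae this] with x hx
      exact slope_seq hx.hasDerivAt
  -- integrals identity
  set G : ℝ → ℝ := fun y => ∫ t in a..y, H t with hG_def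
  have hint : ∀ c d : ℝ, IntervalIntegrable H volume c d := fun c d =>
    hcont.intervalIntegrable c d
  have hident : ∀ n, ∫ x in Ioo a b, F n x
      = (G (b + u n) - G b) / u n - (G (a + u n) - G a) / u n := by
    intro n
    have h1 : ∫ x in Ioo a b, F n x = ∫ x in a..b, F n x := by
      rw [intervalIntegral.integral_of_le hab.le, integral_Ioc_eq_integral_Ioo]
    rw [h1]
    have h2 : ∫ x in a..b, F n x
        = ((∫ x in a..b, H (x + u n)) - ∫ x in a..b, H x) / u n := by
      rw [intervalIntegral.integral_div]
      congr 1
      exact intervalIntegral.integral_sub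
        ((hcont.comp (continuous_add_right (u n))).intervalIntegrable a b) (hint a b)
    rw [h2]
    have h3 : (∫ x in a..b, H (x + u n)) = G (b + u n) - G (a + u n) := by
      rw [intervalIntegral.integral_comp_add_right]
      rw [hG_def]
      simp only
      rw [intervalIntegral.integral_interval_sub_left (hint a (b + u n)) (hint a (a + u n))]
    have h4 : (∫ x in a..b, H x) = G b - G a := by
      simp [hG_def, intervalIntegral.integral_same]
    rw [h3, h4]
    ring
  -- derivative of G
  have hmeasG : StronglyMeasurableAtFilter H (𝓝 b) :=
    hcont.stronglyMeasurable.stronglyMeasurableAtFilter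
  have hGb : HasDerivAt G (H b) b :=
    intervalIntegral.integral_hasDerivAt_right (hint a b)
      hcont.stronglyMeasurable.stronglyMeasurableAtFilter hcont.continuousAt
  have hGa : HasDerivAt G (H a) a :=
    intervalIntegral.integral_hasDerivAt_right (hint a a)
      hcont.stronglyMeasurable.stronglyMeasurableAtFilter hcont.continuousAt
  have hlim2 : Tendsto (fun n => ∫ x in Ioo a b, F n x) atTop (𝓝 (H b - H a)) := by
    simp only [hident]
    exact (slope_seq hGb).sub (slope_seq hGa)
  have hEq : H b - H a = ∫ x in Ioo a b, deriv H x := tendsto_nhds_unique hlim2 hDCT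
  have hnn : 0 ≤ ∫ x in Ioo a b, deriv H x := by
    apply integral_nonneg_of_ae
    filter_upwards [ae_restrict_mem measurableSet_Ioo, ae_restrict_of_ae hd] with x hx h'x
    exact h'x hx
  linarith

lemma monoOn_of_lipOn {f : ℝ → ℝ} {C : ℝ≥0} {a b : ℝ}
    (hf : LipschitzOnWith C f (Icc a b))
    (hd : ∀ᵐ x, x ∈ Ioo a b → 0 ≤ deriv f x) : MonotoneOn f (Icc a b) := by
  obtain ⟨H, hHlip, hEq⟩ := hf.extend_real
  intro u hu v hv huv
  rw [hEq hu, hEq hv]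
  apply key_lip_mono hHlip huv
  filter_upwards [hd] with x hx hxuv
  have hxab : x ∈ Ioo a b := ⟨lt_of_le_of_lt hu.1 hxuv.1, lt_of_lt_of_le hxuv.2 hv.2⟩
  have : deriv H x = deriv f x := by
    apply Filter.EventuallyEq.deriv_eq
    have : Icc a b ∈ 𝓝 x := Icc_mem_nhds hxab.1 hxab.2
    filter_upwards [this] with y hy
    exact (hEq hy).symm
  rw [this]
  exact hx hxab

lemma mono_glue {f : ℝ → ℝ} {x a c d : ℝ} (h1 : MonotoneOn f (Icc x a))
    (h2 : MonotoneOn f (Icc c d)) (hxc : x ≤ c) (hca : c ≤ a) (had : a ≤ d) :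
    MonotoneOn f (Icc x d) := by
  intro u hu v hv huv
  rcases le_or_gt v a with hva | hva
  · exact h1 ⟨hu.1, huv.trans hva⟩ ⟨hv.1, hva⟩ huv
  rcases le_or_gt c u with hcu | hcu
  · exact h2 ⟨hcu, hu.2⟩ ⟨hcu.trans huv, hv.2⟩ huv
  · have hua : u ≤ a := (le_of_lt hcu).trans hca
    have hcv : c ≤ v := hca.trans (le_of_lt hva)
    calc f u ≤ f a := h1 ⟨hu.1, hua⟩ ⟨hxc.trans hca, le_refl a⟩ hua
      _ ≤ f v := h2 ⟨hca, had⟩ ⟨hcv, hv.2⟩ (le_of_lt hva)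

lemma ae_diff_of_locallyLip {g : ℝ → ℝ} (hlip : LocallyLipschitzOn (Ioi (0:ℝ)) g) :
    ∀ᵐ t, t ∈ Ioi (0:ℝ) → DifferentiableAt ℝ g t := by
  -- choose, for each x > 0, a Lipschitz neighborhood
  have hchoice : ∀ x ∈ Ioi (0:ℝ), ∃ t : Set ℝ, t ∈ 𝓝[Ioi (0:ℝ)] x ∧
      ∃ C : ℝ≥0, LipschitzOnWith C g t := by
    intro x hx
    obtain ⟨C, t, ht, hC⟩ := hlip hx
    exact ⟨t, ht, C, hC⟩
  choose! T hT hTlip using hchoice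
  have hTnhds : ∀ x ∈ Ioi (0:ℝ), interior (T x) ∈ 𝓝[Ioi (0:ℝ)] x := by
    intro x hx
    have h1 : 𝓝[Ioi (0:ℝ)] x = 𝓝 x := nhdsWithin_eq_nhds.2 (isOpen_Ioi.mem_nhds hx)
    rw [h1]
    exact interior_mem_nhds.2 (h1 ▸ hT x hx)
  obtain ⟨s, hs_sub, hs_count, hs_cover⟩ :=
    TopologicalSpace.countable_cover_nhdsWithin (f := fun x => interior (T x)) hTnhds
  have hae : ∀ x ∈ s, ∀ᵐ y, y ∈ interior (T x) → DifferentiableAt ℝ g y := by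
    intro x hx
    obtain ⟨C, hC⟩ := hTlip x (hs_sub hx)
    filter_upwards [hC.ae_differentiableWithinAt_of_mem_real] with y hy hyint
    exact (hy (interior_subset hyint)).differentiableAt (mem_interior_iff_mem_nhds.1 hyint)
  have := (ae_ball_iff hs_count).2 hae
  filter_upwards [this] with y hy hy0
  obtain ⟨x, hxs, hyTx⟩ := mem_iUnion₂.1 (hs_cover hy0)
  exact hy x hxs hyTx

lemma exp_lip_nonpos {a b : ℝ} (ha : a ≤ 0) (hb : b ≤ 0) :
    |Real.exp a - Real.exp b| ≤ |a - b| := by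
  wlog h : b ≤ a generalizing a b
  · rw [abs_sub_comm, abs_sub_comm a b]; exact this hb ha (le_of_not_ge h)
  have h1 : Real.exp a ≤ 1 := Real.exp_le_one_iff.2 ha
  have h2 : Real.exp b ≤ Real.exp a := Real.exp_le_exp.2 h
  have h3 : b - a + 1 ≤ Real.exp (b - a) := Real.add_one_le_exp _
  have h4 : Real.exp (b - a) * Real.exp a = Real.exp b := by
    rw [← Real.exp_add]; ring_nf
  rw [abs_of_nonneg (by linarith), abs_of_nonneg (by linarith)]
  nlinarith [Real.exp_pos a]

set_option maxHeartbeats 1000000 in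
lemma part1core (N K : ℝ) (hN : 1 < N) (hK : 0 < K) (g : ℝ → ℝ)
    (hlip : LocallyLipschitzOn (Ioi (0:ℝ)) g)
    (hricae : ∀ᵐ t, t ∈ Ioi (0:ℝ) → -2 * K * g t + (2 / N) * (g t) ^ 2 ≤ deriv g t)
    (hdiffae : ∀ᵐ t, t ∈ Ioi (0:ℝ) → DifferentiableAt ℝ g t)
    (I : Set ℝ) (hI : I ⊆ Ioi (0:ℝ)) (hIc : I.OrdConnected) (hneg : ∀ t ∈ I, g t < 0) :
    MonotoneOn (fun t => Real.exp (-2 * K * t) * (1 / N - K / g t)) I := by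
  set h : ℝ → ℝ := fun t => Real.exp (-2 * K * t) * (1 / N - K / g t) with hh_def
  intro x hx y hy hxy
  rcases eq_or_lt_of_le hxy with rfl | hxy
  · exact le_refl _
  have hIcc : Icc x y ⊆ I := hIc.out hx hy
  have hIccIoi : Icc x y ⊆ Ioi 0 := hIcc.trans hI
  have hN0 : (0:ℝ) < N := lt_trans one_pos hN
  -- uniform negative bound for g on Icc x y
  have hcg : ContinuousOn g (Icc x y) := hlip.continuousOn.mono hIccIoi
  obtain ⟨z, hz, hzmax⟩ := isCompact_Icc.exists_isMaxOn (nonempty_Icc.2 hxy.le) hcg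
  set ε : ℝ := -g z with hε_def
  have hε : 0 < ε := neg_pos.2 (hneg z (hIcc hz))
  have hgle : ∀ s ∈ Icc x y, g s ≤ -ε := by
    intro s hs
    have := hzmax hs
    simpa [hε_def] using this
  -- local monotonicity
  have hloc : ∀ c ∈ Icc x y, ∃ δ > (0:ℝ),
      MonotoneOn h (Icc (max x (c - δ)) (min y (c + δ))) := by
    intro c hc
    have hc0 : c ∈ Ioi (0:ℝ) := hIccIoi hc
    obtain ⟨C, t, ht, hClip⟩ := hlip hc0
    rw [nhdsWithin_eq_nhds.2 (isOpen_Ioi.mem_nhds hc0)] at ht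
    obtain ⟨δ0, hδ0, hball⟩ := Metric.mem_nhds_iff.1 ht
    refine ⟨δ0 / 2, by positivity, ?_⟩
    set j1 := max x (c - δ0 / 2) with hj1
    set j2 := min y (c + δ0 / 2) with hj2
    have hJsub : Icc j1 j2 ⊆ Icc x y :=
      Icc_subset_Icc (le_max_left _ _) (min_le_left _ _)
    have hJt : Icc j1 j2 ⊆ t := by
      intro s hs
      apply hball
      rw [Metric.mem_ball, Real.dist_eq, abs_sub_lt_iff]
      have h1 : c - δ0 / 2 ≤ s := le_trans (le_max_right _ _) hs.1
      have h2 : s ≤ c + δ0 / 2 := le_trans hs.2 (min_le_right _ _)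
      constructor <;> linarith
    -- Lipschitz bound for h on Icc j1 j2
    set L : ℝ := 2 * K * (1 / N + K / ε) + K * C / ε ^ 2 with hL_def
    have hLnn : 0 ≤ L := by positivity
    have hhl : LipschitzOnWith L.toNNReal h (Icc j1 j2) := by
      apply LipschitzOnWith.of_dist_le_mul
      intro s hs r hr
      have hsxy := hJsub hs
      have hrxy := hJsub hr
      have hs0 : (0:ℝ) < s := hIccIoi hsxy
      have hr0 : (0:ℝ) < r := hIccIoi hrxy
      have has : g s ≤ -ε := hgle s hsxy
      have har : g r ≤ -ε := hgle r hrxy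
      have hgsneg : g s < 0 := lt_of_le_of_lt has (by linarith)
      have hgrneg : g r < 0 := lt_of_le_of_lt har (by linarith)
      have hgC : |g s - g r| ≤ (C:ℝ) * |s - r| := by
        have := hClip.dist_le_mul s (hJt hs) r (hJt hr)
        simpa [Real.dist_eq] using this
      -- decompose
      have hdecomp : h s - h r
          = (Real.exp (-2*K*s) - Real.exp (-2*K*r)) * (1/N - K / g s)
            + Real.exp (-2*K*r) * ((1/N - K / g s) - (1/N - K / g r)) := by
        simp only [hh_def]; ring
      have claim1 : |Real.exp (-2*K*s) - Real.exp (-2*K*r)| ≤ 2*K*|s - r| := by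
        have := exp_lip_nonpos (a := -2*K*s) (b := -2*K*r)
          (by nlinarith) (by nlinarith)
        calc |Real.exp (-2*K*s) - Real.exp (-2*K*r)| ≤ |(-2*K*s) - (-2*K*r)| := this
          _ = 2*K*|s - r| := by
              rw [show (-2*K*s) - (-2*K*r) = (-2*K) * (s - r) by ring, abs_mul]
              rw [abs_of_nonpos (by linarith : (-2)*K ≤ 0)]
              ring
      have claim2 : |1/N - K / g s| ≤ 1/N + K/ε := by
        calc |1/N - K / g s| ≤ |1/N| + |K / g s| := abs_sub _ _
          _ = 1/N + K / (-(g s)) := by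
              rw [abs_of_nonneg (by positivity : (0:ℝ) ≤ 1/N), abs_div,
                abs_of_nonneg hK.le, abs_of_neg hgsneg]
          _ ≤ 1/N + K/ε := by gcongr; linarith
      have claim3 : |(1/N - K / g s) - (1/N - K / g r)| ≤ K * ((C:ℝ) * |s-r|) / (ε*ε) := by
        have h1 : (1/N - K / g s) - (1/N - K / g r) = K * (g s - g r) / (g r * g s) := by
          field_simp [ne_of_lt hgsneg, ne_of_lt hgrneg]
          ring
        rw [h1, abs_div, abs_mul, abs_of_nonneg hK.le,
          abs_of_pos (mul_pos_of_neg_of_neg hgrneg hgsneg)]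
        apply div_le_div₀ (by positivity)
        · exact mul_le_mul_of_nonneg_left hgC hK.le
        · positivity
        · nlinarith
      rw [Real.dist_eq, Real.dist_eq, hdecomp]
      have habs := abs_add_le ((Real.exp (-2*K*s) - Real.exp (-2*K*r)) * (1/N - K / g s))
        (Real.exp (-2*K*r) * ((1/N - K / g s) - (1/N - K / g r)))
      rw [abs_mul, abs_mul] at habs
      have hexp1 : |Real.exp (-2*K*r)| ≤ 1 := by
        rw [abs_of_pos (Real.exp_pos _)]
        exact Real.exp_le_one_iff.2 (by nlinarith)
      have hco : (L.toNNReal : ℝ) = L := Real.coe_toNNReal L hLnn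
      rw [hco]
      refine le_trans habs (le_trans (add_le_add
        (mul_le_mul claim1 claim2 (abs_nonneg _) (by positivity))
        (mul_le_mul hexp1 claim3 (abs_nonneg _) one_pos.le)) (le_of_eq ?_))
      rw [hL_def]
      field_simp
    -- a.e. derivative nonneg on the interior
    have hmono : MonotoneOn h (Icc j1 j2) := by
      apply monoOn_of_lipOn hhl
      filter_upwards [hricae, hdiffae] with w hricw hdiffw hw
      have hwxy : w ∈ Icc x y := hJsub (Ioo_subset_Icc_self hw)
      have hw0 : w ∈ Ioi (0:ℝ) := hIccIoi hwxy
      have hgw : g w < 0 := hneg w (hIcc hwxy)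
      have hgw' : g w ≠ 0 := ne_of_lt hgw
      have hd1 : HasDerivAt (fun s : ℝ => -2*K*s) (-2*K) w := by
        simpa using (hasDerivAt_id w).const_mul (-2*K)
      have hd2 : HasDerivAt (fun s : ℝ => Real.exp (-2*K*s))
          (Real.exp (-2*K*w) * (-2*K)) w := hd1.exp
      have hd3 : HasDerivAt g (deriv g w) w := (hdiffw hw0).hasDerivAt
      have hd4 : HasDerivAt (fun s => (g s)⁻¹) (-(deriv g w) / (g w)^2) w := hd3.inv hgw'
      have hd5 : HasDerivAt (fun s => 1/N - K * (g s)⁻¹)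
          (-(K * (-(deriv g w) / (g w)^2))) w := (hd4.const_mul K).const_sub (1/N)
      have hd6 : HasDerivAt h
          (Real.exp (-2*K*w) * (-2*K) * (1/N - K * (g w)⁻¹)
            + Real.exp (-2*K*w) * -(K * (-(deriv g w) / (g w)^2))) w := by
        have heq : (fun s => Real.exp (-2*K*s) * (1/N - K*(g s)⁻¹)) = h := by
          funext s; simp only [hh_def, div_eq_mul_inv]
        exact heq ▸ hd2.mul hd5
      rw [hd6.deriv]
      have hkey : Real.exp (-2*K*w) * (-2*K) * (1/N - K * (g w)⁻¹)
            + Real.exp (-2*K*w) * -(K * (-(deriv g w) / (g w)^2))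
          = Real.exp (-2*K*w) * K / (g w)^2
            * (deriv g w - (-2 * K * g w + (2 / N) * (g w) ^ 2)) := by
        field_simp
        ring
      rw [hkey]
      apply mul_nonneg
      · positivity
      · linarith [hricw hw0]
    exact hmono
  -- glue local monotonicity via sSup
  set A : Set ℝ := {u ∈ Icc x y | MonotoneOn h (Icc x u)} with hA_def
  have hxA : x ∈ A := by
    refine ⟨left_mem_Icc.2 hxy.le, ?_⟩
    intro p hp q hq hpq
    have : p = x := le_antisymm hp.2 hp.1
    have : q = x := le_antisymm hq.2 hq.1
    simp_all
  have hAbdd : BddAbove A := ⟨y, fun u hu => hu.1.2⟩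
  set c := sSup A with hc_def
  have hcx : x ≤ c := le_csSup hAbdd hxA
  have hcy : c ≤ y := csSup_le ⟨x, hxA⟩ fun u hu => hu.1.2
  obtain ⟨δ, hδ, hmonoJ⟩ := hloc c ⟨hcx, hcy⟩
  obtain ⟨a, haA, hca⟩ := exists_lt_of_lt_csSup ⟨x, hxA⟩ (by linarith : c - δ < sSup A)
  have hac : a ≤ c := le_csSup hAbdd haA
  have hj2A : min y (c + δ) ∈ A := by
    constructor
    · exact ⟨le_trans hcx (le_min hcy (by linarith)), min_le_left _ _⟩
    · apply mono_glue haA.2 hmonoJ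
      · exact le_max_left _ _
      · exact max_le (haA.1.1) (by linarith)
      · exact le_min (le_trans hac hcy) (by linarith)
  have hj2c : min y (c + δ) ≤ c := le_csSup hAbdd hj2A
  have hcy' : c = y := by
    by_contra hne
    have : c < y := lt_of_le_of_ne hcy hne
    have : c < min y (c + δ) := lt_min this (by linarith)
    linarith
  have h5 : min y (c + δ) = y := min_eq_left (by linarith)
  rw [h5] at hj2A
  exact hj2A.2 (left_mem_Icc.2 hxy.le) (right_mem_Icc.2 hxy.le) hxy.le

/-- Riccati comparison step in the proof of the logarithmic entropy-energy
inequality: if `g = Φ'` is nonpositive, locally Lipschitz on `(0,∞)`, and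
satisfies `g' ≥ -2K g + (2/N) g²` a.e. on `(0,∞)`, then
`t ↦ e^{-2Kt} (1/N - K/g(t))` is nondecreasing on any interval where `g < 0`,
and `-g(t) ≤ KN (e^{2Kt}(1 - KN/g(0⁺)) - 1)⁻¹` for all `t > 0`
(where `g(0⁺) < 0` is the right limit of `g` at `0`). -/
theorem stmt_12 (N K : ℝ) (hN : 1 < N) (hK : 0 < K)
    (g : ℝ → ℝ) (hgnonpos : ∀ t ∈ Ioi (0 : ℝ), g t ≤ 0)
    (hlip : LocallyLipschitzOn (Ioi (0 : ℝ)) g)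
    (hric : ∀ᵐ t ∂(volume.restrict (Ioi (0 : ℝ))),
      -2 * K * g t + (2 / N) * (g t) ^ 2 ≤ deriv g t)
    (g0 : ℝ) (hg0 : Tendsto g (nhdsWithin 0 (Ioi 0)) (nhds g0))
    (hg0neg : g0 < 0) :
    (∀ I : Set ℝ, I ⊆ Ioi (0 : ℝ) → I.OrdConnected →
      (∀ t ∈ I, g t < 0) →
      MonotoneOn (fun t => Real.exp (-2 * K * t) * (1 / N - K / g t)) I) ∧
    (∀ t > (0 : ℝ),
      -g t ≤ K * N * (Real.exp (2 * K * t) * (1 - K * N / g0) - 1)⁻¹) := by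
  have hN0 : (0:ℝ) < N := lt_trans one_pos hN
  have hricae : ∀ᵐ t, t ∈ Ioi (0:ℝ) → -2 * K * g t + (2 / N) * (g t) ^ 2 ≤ deriv g t :=
    (ae_restrict_iff' measurableSet_Ioi).1 hric
  have hdiffae := ae_diff_of_locallyLip hlip
  have part1 := part1core N K hN hK g hlip hricae hdiffae
  refine ⟨part1, ?_⟩
  intro t ht
  set h : ℝ → ℝ := fun s => Real.exp (-2 * K * s) * (1 / N - K / g s) with hh_def
  set D : ℝ := Real.exp (2 * K * t) * (1 - K * N / g0) - 1 with hD_def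
  have hKNg0 : K * N / g0 < 0 := div_neg_of_pos_of_neg (by positivity) hg0neg
  have hexp1 : 1 < Real.exp (2 * K * t) := by
    have := Real.exp_lt_exp.2 (show (0:ℝ) < 2 * K * t by positivity)
    rwa [Real.exp_zero] at this
  have hD : 0 < D := by
    rw [hD_def]
    nlinarith
  rcases eq_or_lt_of_le (hgnonpos t ht) with hgt0 | hgt
  · rw [hgt0, neg_zero]
    exact mul_nonneg (by positivity) (inv_nonneg.2 hD.le)
  -- g t < 0 case
  · set S : Set ℝ := {s : ℝ | s ∈ Ioc 0 t ∧ ∀ r ∈ Icc s t, g r < 0} with hS_def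
    have htS : t ∈ S := by
      refine ⟨⟨ht, le_refl t⟩, fun r hr => ?_⟩
      have : r = t := le_antisymm hr.2 hr.1
      rwa [this]
    have hbdd : BddBelow S := ⟨0, fun s hs => hs.1.1.le⟩
    set s₀ := sInf S with hs₀_def
    have hs₀0 : 0 ≤ s₀ := le_csInf ⟨t, htS⟩ fun s hs => hs.1.1.le
    have hs₀t : s₀ ≤ t := csInf_le hbdd htS
    have hIoo : ∀ r, s₀ < r → r ≤ t → g r < 0 := by
      intro r hr1 hr2
      obtain ⟨s, hsS, hs⟩ := exists_lt_of_csInf_lt ⟨t, htS⟩ hr1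
      exact hsS.2 r ⟨hs.le, hr2⟩
    have hgcont : ContinuousOn g (Ioi 0) := hlip.continuousOn
    have hs₀ : s₀ = 0 := by
      by_contra hne
      have hs₀pos : 0 < s₀ := lt_of_le_of_ne hs₀0 (Ne.symm hne)
      have hcontAt : ContinuousAt g s₀ :=
        hgcont.continuousAt (isOpen_Ioi.mem_nhds hs₀pos)
      rcases lt_trichotomy (g s₀) 0 with hneg0 | hzero | hpos
      · -- g s₀ < 0 : contradiction with inf
        have hev : ∀ᶠ r in 𝓝 s₀, g r < 0 := hcontAt (Iio_mem_nhds hneg0)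
        obtain ⟨η, hη, hball⟩ := Metric.eventually_nhds_iff.1 hev
        set s₁ := max (s₀ / 2) (s₀ - η / 2) with hs₁_def
        have hs₁lt : s₁ < s₀ := max_lt (by linarith) (by linarith)
        have hs₁S : s₁ ∈ S := by
          have h01 : s₁ ∈ Ioc 0 t := ⟨lt_max_of_lt_left (by linarith), by linarith⟩
          have h02 : ∀ r ∈ Icc s₁ t, g r < 0 := by
            intro r hr
            rcases le_or_gt r s₀ with hrs | hrs
            · apply hball
              rw [Real.dist_eq, abs_sub_lt_iff]
              have : s₀ - η / 2 ≤ r := le_trans (le_max_right _ _) hr.1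
              constructor <;> linarith
            · exact hIoo r hrs hr.2
          exact ⟨h01, h02⟩
        have := csInf_le hbdd hs₁S
        linarith
      · -- g s₀ = 0 : blow-up contradiction
        have hs₀lt : s₀ < t := by
          rcases eq_or_lt_of_le hs₀t with heq | hlt
          · rw [heq] at hzero; exact absurd hzero (ne_of_lt hgt)
          · exact hlt
        have hmono := part1 (Ioc s₀ t) (fun r hr => lt_trans hs₀pos hr.1)
          ordConnected_Ioc (fun r hr => hIoo r hr.1 hr.2)
        set B : ℝ := h t with hB_def
        have hBpos : 0 < B := by
          rw [hB_def, hh_def]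
          have h1 : K / g t < 0 := div_neg_of_pos_of_neg hK hgt
          have h2 : 0 < 1 / N := by positivity
          exact mul_pos (Real.exp_pos _) (by linarith)
        set E : ℝ := Real.exp (-2 * K * t) with hE_def
        have hEpos : 0 < E := Real.exp_pos _
        set d : ℝ := E * K / B with hd_def
        have hdpos : 0 < d := by positivity
        have hev : ∀ᶠ r in 𝓝 s₀, g r ∈ Ioo (-d) d := by
          apply hcontAt
          rw [hzero]
          exact Ioo_mem_nhds (by linarith) hdpos
        obtain ⟨η, hη, hball⟩ := Metric.eventually_nhds_iff.1 hev
        set s := min t (s₀ + η / 2) with hs_def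
        have hss₀ : s₀ < s := lt_min hs₀lt (by linarith)
        have hst : s ≤ t := min_le_left _ _
        have hsmem : s ∈ Ioc s₀ t := ⟨hss₀, hst⟩
        have hgs : g s ∈ Ioo (-d) d := by
          apply hball
          rw [Real.dist_eq, abs_sub_lt_iff]
          have : s ≤ s₀ + η / 2 := min_le_right _ _
          constructor <;> linarith
        have hgsneg : g s < 0 := hIoo s hss₀ hst
        have hgsd : -g s < d := by
          have := hgs.1
          linarith
        have hle : h s ≤ B := hmono hsmem ⟨hs₀lt, le_refl t⟩ hst
        -- but h s > B
        have hlb : E * (K / (-g s)) ≤ h s := by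
          rw [hh_def]
          have h1 : E ≤ Real.exp (-2 * K * s) := by
            rw [hE_def]
            apply Real.exp_le_exp.2
            nlinarith
          have h2 : K / (-g s) ≤ 1 / N - K / g s := by
            have : K / g s = -(K / (-g s)) := by
              rw [div_neg, neg_neg]
            rw [this]
            have : 0 < 1 / N := by positivity
            linarith
          have h3 : 0 < K / (-g s) := div_pos hK (by linarith)
          calc E * (K / (-g s)) ≤ Real.exp (-2 * K * s) * (K / (-g s)) :=
                mul_le_mul_of_nonneg_right h1 h3.le
            _ ≤ Real.exp (-2 * K * s) * (1 / N - K / g s) :=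
                mul_le_mul_of_nonneg_left h2 (Real.exp_pos _).le
        have hgt2 : B < E * (K / (-g s)) := by
          have h4 : B / E < K / (-g s) := by
            have hgspos : 0 < -g s := by linarith
            rw [div_lt_div_iff₀ hEpos hgspos]
            have : -g s < E * K / B := hgsd
            calc B * -g s < B * (E * K / B) := by
                  apply mul_lt_mul_of_pos_left hgsd hBpos
              _ = K * E := by field_simp
          calc B = E * (B / E) := by field_simp
            _ < E * (K / (-g s)) := mul_lt_mul_of_pos_left h4 hEpos
        linarith
      · -- g s₀ > 0 impossible
        have := hgnonpos s₀ hs₀pos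
        linarith
    -- s₀ = 0 : monotonicity on Ioc 0 t and limit
    have hneg' : ∀ r ∈ Ioc (0:ℝ) t, g r < 0 := fun r hr => hIoo r (hs₀ ▸ hr.1) hr.2
    have hmono := part1 (Ioc 0 t) (fun r hr => hr.1) ordConnected_Ioc hneg'
    have hle : ∀ s ∈ Ioc (0:ℝ) t, h s ≤ h t :=
      fun s hs => hmono hs ⟨ht, le_refl t⟩ hs.2
    have hlim : Tendsto h (𝓝[>] (0:ℝ)) (𝓝 (1 * (1 / N - K / g0))) := by
      apply Tendsto.mul
      · have hc : ContinuousAt (fun s : ℝ => Real.exp (-2 * K * s)) 0 :=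
          (Real.continuous_exp.comp (continuous_const.mul continuous_id)).continuousAt
        have h5 : Tendsto (fun s : ℝ => Real.exp (-2 * K * s)) (𝓝[>] (0:ℝ))
            (𝓝 (Real.exp (-2 * K * 0))) :=
          hc.tendsto.mono_left nhdsWithin_le_nhds
        simpa using h5
      · exact tendsto_const_nhds.sub (tendsto_const_nhds.div hg0 (ne_of_lt hg0neg))
    have hfinal : 1 * (1 / N - K / g0) ≤ h t := by
      apply le_of_tendsto hlim
      filter_upwards [Ioc_mem_nhdsGT_of_mem ⟨le_refl (0:ℝ), ht⟩] with s hs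
      exact hle s hs
    rw [one_mul] at hfinal
    -- algebra to conclude
    have hE : Real.exp (2 * K * t) * Real.exp (-2 * K * t) = 1 := by
      rw [← Real.exp_add]; norm_num
    have hgtne : g t ≠ 0 := ne_of_lt hgt
    have step1 : Real.exp (2 * K * t) * (1 - K * N / g0) ≤ 1 - K * N / g t := by
      have h2 : N * Real.exp (2 * K * t) * (1 / N - K / g0)
          ≤ N * Real.exp (2 * K * t) * (Real.exp (-2 * K * t) * (1 / N - K / g t)) :=
        mul_le_mul_of_nonneg_left hfinal (by positivity)
      have e1 : Real.exp (2 * K * t) * (1 - K * N / g0)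
          = N * Real.exp (2 * K * t) * (1 / N - K / g0) := by
        field_simp
      have e2 : N * Real.exp (2 * K * t) * (Real.exp (-2 * K * t) * (1 / N - K / g t))
          = 1 - K * N / g t := by
        rw [show N * Real.exp (2 * K * t) * (Real.exp (-2 * K * t) * (1 / N - K / g t))
            = (Real.exp (2 * K * t) * Real.exp (-2 * K * t)) * (N * (1 / N - K / g t))
          by ring, hE, one_mul]
        field_simp
      calc Real.exp (2 * K * t) * (1 - K * N / g0)
          = N * Real.exp (2 * K * t) * (1 / N - K / g0) := e1
        _ ≤ N * Real.exp (2 * K * t) * (Real.exp (-2 * K * t) * (1 / N - K / g t)) := h2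
        _ = 1 - K * N / g t := e2
    have hgtpos : 0 < -g t := by linarith
    have step2 : D ≤ K * N / (-g t) := by
      have : K * N / (-g t) = -(K * N / g t) := by rw [div_neg]
      rw [this, hD_def]
      linarith
    have step3 : D * (-g t) ≤ K * N := by
      have := (le_div_iff₀ hgtpos).1 step2
      linarith
    rw [show K * N * D⁻¹ = K * N / D from (div_eq_mul_inv _ _).symm]
    rw [le_div_iff₀ hD]
    linarith
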